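/- For every integer n ≥ 1, the derivative of the polynomial function y ↦ (1/(y+1))·binom(y+n, n+1) = (y+n)(y+n−1)⋯(y+2)/(n+1)! evaluated at y = −1 equals (1 − H_{n−1})/(n(n+1)). -/

import Mathlib

/-- The `n`-th harmonic number `H_n = ∑_{k=1}^n 1/k` (with `H_0 = 0`), as a real number. -/
noncomputable def harmonicR (n : ℕ) : ℝ := ∑ k ∈ Finset.range n, (1 : ℝ) / (k + 1)

/-- For every integer `n ≥ 1`, the derivative at `y = −1` of the polynomial function
`y ↦ (1/(y+1)) binom(y+n, n+1) = y(y+2)(y+3)⋯(y+n)/(n+1)!` equals `(1 − H_{n−1})/(n(n+1))`. -/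
theorem deriv_binomDiv_at_neg_one (n : ℕ) (hn : 1 ≤ n) :
    deriv (fun y : ℝ =>
        y * (∏ i ∈ Finset.range (n - 1), (y + (i : ℝ) + 2)) / ((n + 1).factorial : ℝ)) (-1) =
      (1 - harmonicR (n - 1)) / ((n : ℝ) * ((n : ℝ) + 1)) := by
  set m := n - 1 with hm
  have hnm : n = m + 1 := (Nat.succ_pred_eq_of_pos hn).symm
  -- derivative of the product
  have hg : HasDerivAt (fun y : ℝ => ∏ i ∈ Finset.range m, (y + (i : ℝ) + 2))
      (∑ i ∈ Finset.range m, (∏ j ∈ (Finset.range m).erase i, ((-1 : ℝ) + (j : ℝ) + 2)) • (1 : ℝ))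
      (-1) := by
    apply HasDerivAt.fun_finsetProd (fun i _ => ?_)
    have : (fun y : ℝ => y + (i : ℝ) + 2) = fun y : ℝ => y + ((i : ℝ) + 2) := by
      funext y; ring
    rw [this]
    simpa using ((hasDerivAt_id (-1 : ℝ)).add_const ((i : ℝ) + 2))
  have hprod : ∀ s : Finset ℕ, (∏ j ∈ s, ((-1 : ℝ) + (j : ℝ) + 2)) = ∏ j ∈ s, ((j : ℝ) + 1) := by
    intro s; apply Finset.prod_congr rfl; intro j _; ring
  have hfact : (∏ j ∈ Finset.range m, ((j : ℝ) + 1)) = (m.factorial : ℝ) := by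
    rw [← Finset.prod_range_add_one_eq_factorial]; push_cast; rfl
  have hgval : (∏ j ∈ Finset.range m, ((-1 : ℝ) + (j : ℝ) + 2)) = (m.factorial : ℝ) := by
    rw [hprod, hfact]
  have herase : ∀ i ∈ Finset.range m,
      (∏ j ∈ (Finset.range m).erase i, ((-1 : ℝ) + (j : ℝ) + 2))
        = (m.factorial : ℝ) / ((i : ℝ) + 1) := by
    intro i hi
    have h := Finset.mul_prod_erase (Finset.range m) (fun j => ((-1 : ℝ) + (j : ℝ) + 2)) hi
    have hi1 : ((-1 : ℝ) + (i : ℝ) + 2) = (i : ℝ) + 1 := by ring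
    rw [hgval] at h
    field_simp [hi1] at h ⊢
    linarith [h]
  have hsum : (∑ i ∈ Finset.range m,
      (∏ j ∈ (Finset.range m).erase i, ((-1 : ℝ) + (j : ℝ) + 2)) • (1 : ℝ))
      = (m.factorial : ℝ) * harmonicR m := by
    rw [harmonicR, Finset.mul_sum]
    apply Finset.sum_congr rfl
    intro i hi
    rw [herase i hi, smul_eq_mul]
    field_simp
  -- derivative of the whole function
  have hf : HasDerivAt (fun y : ℝ =>
      y * (∏ i ∈ Finset.range m, (y + (i : ℝ) + 2)) / ((n + 1).factorial : ℝ))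
      ((1 * (∏ i ∈ Finset.range m, ((-1 : ℝ) + (i : ℝ) + 2)) +
        (-1) * ((m.factorial : ℝ) * harmonicR m)) / ((n + 1).factorial : ℝ)) (-1) := by
    rw [← hsum]
    exact ((hasDerivAt_id (-1 : ℝ)).mul hg).div_const _
  rw [hf.deriv, hgval]
  -- arithmetic
  have hfac : ((n + 1).factorial : ℝ) = (m.factorial : ℝ) * (n : ℝ) * ((n : ℝ) + 1) := by
    rw [hnm]
    rw [Nat.factorial_succ, Nat.factorial_succ]
    push_cast
    ring
  have hm0 : (m.factorial : ℝ) ≠ 0 := by positivity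
  have hn0 : (n : ℝ) ≠ 0 := by positivity
  have hn1 : (n : ℝ) + 1 ≠ 0 := by positivity
  rw [hfac]
  field_simp
  ring
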